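/- arXiv:1701.04223 — 2 statements merged into one kernel-verified Lean document; each statement's English description precedes it below -/
import Mathlib

section
/- Let T = (X₁, X₂, X₃; f₁, f₂, f₃) and T' = (Y₁, Y₂, Y₃; g₁, g₂, g₃) be triangles of the idempotent completion Karoubi C belonging to the class Θ̃, and let a : X₁ → Y₁ and b : X₂ → Y₂ be morphisms with b ∘ f₁ = g₁ ∘ a. Then there exists c : X₃ → Y₃ such that (a, b, c) is a morphism of triangles (i.e. c ∘ f₂ = g₂ ∘ b and a⟦1⟧ ∘ f₃ = g₃ ∘ c). -/
open CategoryTheory CategoryTheory.Limits CategoryTheory.Pretriangulated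
  CategoryTheory.Idempotents ZeroObject

variable (C : Type*) [Category C] [Preadditive C] [HasZeroObject C] [HasFiniteBiproducts C]
  [HasShift C ℤ] [∀ n : ℤ, (shiftFunctor C n).Additive] [Pretriangulated C]

/-- The shift on the idempotent completion `Karoubi C` induced by the shift on `C`:
`(A, e)⟦n⟧ = (A⟦n⟧, e⟦n⟧)`. -/
noncomputable instance karoubiHasShift : HasShift (Karoubi C) ℤ :=
  HasShift.induced (toKaroubi C) ℤ
    (fun n => (functorExtension₂ C C).obj (shiftFunctor C n))
    (fun n => (functorExtension₂CompWhiskeringLeftToKaroubiIso C C).app (shiftFunctor C n))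

/-- The functor `toKaroubi C` commutes with the shifts. -/
noncomputable instance toKaroubiCommShift : (toKaroubi C).CommShift ℤ :=
  Functor.CommShift.ofInduced (toKaroubi C) ℤ
    (fun n => (functorExtension₂ C C).obj (shiftFunctor C n))
    (fun n => (functorExtension₂CompWhiskeringLeftToKaroubiIso C C).app (shiftFunctor C n))

noncomputable instance karoubiShiftAdditive (n : ℤ) :
    (shiftFunctor (Karoubi C) n).Additive := by
  change ((functorExtension₂ C C).obj (shiftFunctor C n)).Additive
  constructor
  intro X Y f g
  ext
  simp <;> rfl

noncomputable instance : HasBinaryBiproducts (Karoubi C) :=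
  hasBinaryBiproducts_of_finite_biproducts _

variable {C}

/-- The direct sum of two triangles: the triangle on the biproducts of the corresponding
objects, with the componentwise maps. -/
noncomputable def triangleSum {D : Type*} [Category D] [Preadditive D] [HasBinaryBiproducts D]
    [HasShift D ℤ] (T T' : Triangle D) : Triangle D :=
  Triangle.mk (biprod.map T.mor₁ T'.mor₁) (biprod.map T.mor₂ T'.mor₂)
    (biprod.desc (T.mor₃ ≫ (biprod.inl : T.obj₁ ⟶ T.obj₁ ⊞ T'.obj₁)⟦(1:ℤ)⟧')
      (T'.mor₃ ≫ (biprod.inr : T'.obj₁ ⟶ T.obj₁ ⊞ T'.obj₁)⟦(1:ℤ)⟧'))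

variable (C)

/-- The class `Θ̃` of triangles of `Karoubi C`: a triangle `T` belongs to `Θ̃` if there is a
triangle `T'` of `Karoubi C` such that `T ⊕ T'` is isomorphic to the image under
`(toKaroubi C).mapTriangle` of a distinguished triangle of `C`. -/
noncomputable def thetaTilde : Set (Triangle (Karoubi C)) :=
  {T | ∃ (T' : Triangle (Karoubi C)) (S : Triangle C),
    (S ∈ distTriang C) ∧ Nonempty (triangleSum T T' ≅ (toKaroubi C).mapTriangle.obj S)}

/-- Given triangles `T, T'` of `Karoubi C` in the class `Θ̃` and morphisms `a, b` making the
first square commute, there is a morphism `c` completing `(a, b)` to a morphism of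
triangles. -/
theorem stmt12 (T T' : Triangle (Karoubi C)) (hT : T ∈ thetaTilde C) (hT' : T' ∈ thetaTilde C)
    (a : T.obj₁ ⟶ T'.obj₁) (b : T.obj₂ ⟶ T'.obj₂) (comm : T.mor₁ ≫ b = a ≫ T'.mor₁) :
    ∃ c : T.obj₃ ⟶ T'.obj₃,
      T.mor₂ ≫ c = b ≫ T'.mor₂ ∧ T.mor₃ ≫ a⟦(1:ℤ)⟧' = c ≫ T'.mor₃ := by
  obtain ⟨T₂, S, hS, ⟨α⟩⟩ := hT
  obtain ⟨T₂', S', hS', ⟨β⟩⟩ := hT'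
  let A₁ : (toKaroubi C).obj S.obj₁ ⟶ (toKaroubi C).obj S'.obj₁ :=
    α.inv.hom₁ ≫ biprod.map a (0 : T₂.obj₁ ⟶ T₂'.obj₁) ≫ β.hom.hom₁
  let A₂ : (toKaroubi C).obj S.obj₂ ⟶ (toKaroubi C).obj S'.obj₂ :=
    α.inv.hom₂ ≫ biprod.map b (0 : T₂.obj₂ ⟶ T₂'.obj₂) ≫ β.hom.hom₂
  have hmid₁ : (triangleSum T T₂).mor₁ ≫ biprod.map b (0 : T₂.obj₂ ⟶ T₂'.obj₂)
      = biprod.map a (0 : T₂.obj₁ ⟶ T₂'.obj₁) ≫ (triangleSum T' T₂').mor₁ := by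
    apply biprod.hom_ext'
    · dsimp only [triangleSum, Triangle.mk]; simp [triangleSum, reassoc_of% comm, -Karoubi.hom_ext_iff, -zero_def]
    · dsimp only [triangleSum, Triangle.mk]; simp [triangleSum, -Karoubi.hom_ext_iff, -zero_def]
  have hsq : S.mor₁ ≫ (toKaroubi C).preimage A₂ = (toKaroubi C).preimage A₁ ≫ S'.mor₁ := by
    apply (toKaroubi C).map_injective
    simp only [Functor.map_comp, Functor.map_preimage, A₁, A₂]
    have h1 : (toKaroubi C).map S.mor₁ = ((toKaroubi C).mapTriangle.obj S).mor₁ := rfl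
    have h2 : (toKaroubi C).map S'.mor₁ = ((toKaroubi C).mapTriangle.obj S').mor₁ := rfl
    erw [h1, h2, α.inv.comm₁_assoc, ← Category.assoc (triangleSum T T₂).mor₁, hmid₁, Category.assoc, β.hom.comm₁]
    erw [Category.assoc, Category.assoc]
    rfl
  obtain ⟨c₀, hc₁, hc₂⟩ := complete_distinguished_triangle_morphism S S' hS hS'
    ((toKaroubi C).preimage A₁) ((toKaroubi C).preimage A₂) hsq
  let φC : S ⟶ S' :=
    { hom₁ := (toKaroubi C).preimage A₁, hom₂ := (toKaroubi C).preimage A₂, hom₃ := c₀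
      comm₁ := hsq, comm₂ := hc₁, comm₃ := hc₂ }
  let ψ : triangleSum T T₂ ⟶ triangleSum T' T₂' :=
    α.hom ≫ (toKaroubi C).mapTriangle.map φC ≫ β.inv
  have hψ₁ : ψ.hom₁ = biprod.map a (0 : T₂.obj₁ ⟶ T₂'.obj₁) := by
    have h : ((toKaroubi C).mapTriangle.map φC).hom₁ = A₁ := (toKaroubi C).map_preimage A₁
    simp only [ψ, comp_hom₁, h, A₁]
    erw [Category.assoc, Iso.hom_inv_id_triangle_hom₁_assoc, Category.assoc,
      Iso.hom_inv_id_triangle_hom₁]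
    exact Category.comp_id _
  have hψ₂ : ψ.hom₂ = biprod.map b (0 : T₂.obj₂ ⟶ T₂'.obj₂) := by
    have h : ((toKaroubi C).mapTriangle.map φC).hom₂ = A₂ := (toKaroubi C).map_preimage A₂
    simp only [ψ, comp_hom₂, h, A₂]
    erw [Category.assoc, Iso.hom_inv_id_triangle_hom₂_assoc, Category.assoc,
      Iso.hom_inv_id_triangle_hom₂]
    exact Category.comp_id _
  have h2 := ψ.comm₂
  have h3 := ψ.comm₃
  have hl : (biprod.inl : T.obj₂ ⟶ _) ≫ (triangleSum T T₂).mor₂ = T.mor₂ ≫ biprod.inl := by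
    dsimp only [triangleSum, Triangle.mk]; simp [triangleSum, -Karoubi.hom_ext_iff, -zero_def]
  have hinl : (biprod.inl : T.obj₃ ⟶ _) ≫ (triangleSum T T₂).mor₃
      = T.mor₃ ≫ (biprod.inl : T.obj₁ ⟶ T.obj₁ ⊞ T₂.obj₁)⟦(1:ℤ)⟧' := by
    dsimp only [triangleSum, Triangle.mk]; simp [triangleSum, -Karoubi.hom_ext_iff, -zero_def]
  have hfst : (biprod.fst : T'.obj₃ ⊞ T₂'.obj₃ ⟶ _) ≫ T'.mor₃
      = (triangleSum T' T₂').mor₃ ≫ (biprod.fst : T'.obj₁ ⊞ T₂'.obj₁ ⟶ _)⟦(1:ℤ)⟧' := by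
    dsimp only [triangleSum, Triangle.mk]
    apply biprod.hom_ext'
    · simp [← Functor.map_comp, -Karoubi.hom_ext_iff, -zero_def]
    · simp [← Functor.map_comp, -Karoubi.hom_ext_iff, -zero_def]
  refine ⟨biprod.inl ≫ ψ.hom₃ ≫ biprod.fst, ?_, ?_⟩
  · calc T.mor₂ ≫ biprod.inl ≫ ψ.hom₃ ≫ biprod.fst
        = (T.mor₂ ≫ biprod.inl) ≫ ψ.hom₃ ≫ biprod.fst := by
          simp only [Category.assoc]
      _ = biprod.inl ≫ ((triangleSum T T₂).mor₂ ≫ ψ.hom₃) ≫ biprod.fst := by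
          rw [← hl]; exact (Category.assoc _ _ _).trans (congrArg _ (Category.assoc _ _ _).symm)
      _ = biprod.inl ≫ (ψ.hom₂ ≫ (triangleSum T' T₂').mor₂) ≫ biprod.fst := by erw [h2]; rfl
      _ = b ≫ T'.mor₂ := by
          rw [hψ₂]
          dsimp only [triangleSum, Triangle.mk]; simp [triangleSum, -Karoubi.hom_ext_iff, -zero_def]
  · calc T.mor₃ ≫ a⟦(1:ℤ)⟧'
        = T.mor₃ ≫ ((biprod.inl : T.obj₁ ⟶ _) ≫ biprod.map a (0 : T₂.obj₁ ⟶ T₂'.obj₁)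
            ≫ (biprod.fst : T'.obj₁ ⊞ T₂'.obj₁ ⟶ _))⟦(1:ℤ)⟧' := by
          rw [biprod.inl_map_assoc, biprod.inl_fst, Category.comp_id]
      _ = (biprod.inl ≫ (triangleSum T T₂).mor₃) ≫ (ψ.hom₁)⟦(1:ℤ)⟧'
            ≫ (biprod.fst : T'.obj₁ ⊞ T₂'.obj₁ ⟶ _)⟦(1:ℤ)⟧' := by
          rw [hinl, hψ₁]
          erw [Functor.map_comp, Functor.map_comp, Category.assoc]
          rfl
      _ = biprod.inl ≫ ((triangleSum T T₂).mor₃ ≫ (ψ.hom₁)⟦(1:ℤ)⟧')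
            ≫ (biprod.fst : T'.obj₁ ⊞ T₂'.obj₁ ⟶ _)⟦(1:ℤ)⟧' := by
          exact (Category.assoc _ _ _).trans (congrArg _ (Category.assoc _ _ _).symm)
      _ = biprod.inl ≫ (ψ.hom₃ ≫ (triangleSum T' T₂').mor₃)
            ≫ (biprod.fst : T'.obj₁ ⊞ T₂'.obj₁ ⟶ _)⟦(1:ℤ)⟧' := by erw [h3]; rfl
      _ = (biprod.inl ≫ ψ.hom₃ ≫ biprod.fst) ≫ T'.mor₃ := by
          exact (congrArg _ (Category.assoc _ _ _)).trans ((congrArg (fun x => biprod.inl ≫ ψ.hom₃ ≫ x) hfst.symm).trans ((Category.assoc _ _ _).trans (congrArg _ (Category.assoc _ _ _))).symm)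
end

section
/- Uniqueness of the induced structure: let Θ' be a class of triangles of the idempotent completion Karoubi C which, with respect to the induced shift, satisfies the pretriangulated axioms TR1–TR3, is closed under direct summands of triangles, and contains (toKaroubi C).mapTriangle(T) for every distinguished triangle T of C. Then Θ' coincides with the class Θ̃. -/
open CategoryTheory CategoryTheory.Limits CategoryTheory.Pretriangulated
  CategoryTheory.Idempotents ZeroObject

variable (C : Type*) [Category C] [Preadditive C] [HasZeroObject C] [HasFiniteBiproducts C]
  [HasShift C ℤ] [∀ n : ℤ, (shiftFunctor C n).Additive] [Pretriangulated C]

variable {C}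

variable (C)

section SumDistinguished

variable {D : Type*} [Category D] [Preadditive D] [HasZeroObject D] [HasShift D ℤ]
  [∀ n : ℤ, (shiftFunctor D n).Additive] [Pretriangulated D]

/-- The isomorphism between a binary biproduct and the product indexed by `Bool`. -/
noncomputable def biprodIsoPiBool (X : Bool → D) : (X true ⊞ X false) ≅ ∏ᶜ X :=
  { hom := Pi.lift (fun b => match b with | true => biprod.fst | false => biprod.snd)
    inv := biprod.lift (Pi.π _ true) (Pi.π _ false)
    hom_inv_id := by ext <;> simp
    inv_hom_id := by apply limit.hom_ext; rintro ⟨(_|_)⟩ <;> simp }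

/-- The direct sum of two distinguished triangles is distinguished. -/
lemma triangleSum_distinguished (T T' : Triangle D)
    (hT : T ∈ distTriang D) (hT' : T' ∈ distTriang D) :
    triangleSum T T' ∈ distTriang D := by
  let F : Bool → Triangle D := fun b => bif b then T else T'
  have hF : ∀ b, F b ∈ distTriang D := by rintro (_|_) <;> assumption
  refine isomorphic_distinguished _ (productTriangle_distinguished F hF) _ ?_
  refine Triangle.isoMk _ _ (biprodIsoPiBool (fun b => (F b).obj₁))
    (biprodIsoPiBool (fun b => (F b).obj₂)) (biprodIsoPiBool (fun b => (F b).obj₃)) ?_ ?_ ?_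
  · apply limit.hom_ext; rintro ⟨(_|_)⟩ <;>
      erw [Category.assoc, Category.assoc, limMap_π, limit.lift_π_assoc, limit.lift_π] <;> simp [triangleSum, F] <;>
        [exact biprod.map_snd _ _; exact biprod.map_fst _ _]
  · apply limit.hom_ext; rintro ⟨(_|_)⟩ <;>
      erw [Category.assoc, Category.assoc, limMap_π, limit.lift_π_assoc, limit.lift_π] <;> simp [triangleSum, F] <;>
        [exact biprod.map_snd _ _; exact biprod.map_fst _ _]
  · dsimp only [triangleSum, productTriangle, Triangle.mk]
    rw [← cancel_mono (piComparison (shiftFunctor D (1:ℤ)) (fun b => (F b).obj₁))]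
    simp only [Category.assoc, IsIso.inv_hom_id, Category.comp_id]
    apply limit.hom_ext
    rintro ⟨(_|_)⟩ <;>
      · dsimp [triangleSum]
        simp only [Category.assoc, IsIso.inv_hom_id_assoc, limMap_π, Discrete.natTrans_app]
        apply biprod.hom_ext' <;>
          simp [F, biprodIsoPiBool, ← Functor.map_comp]

end SumDistinguished

section KaroubiCompl

variable {C}

/-- The complementary idempotent: `(A, 1 - e)`. -/
noncomputable def karoubiCompl (P : Karoubi C) : Karoubi C :=
  ⟨P.X, 𝟙 P.X - P.p, by simp [Preadditive.comp_sub, Preadditive.sub_comp, P.idem]⟩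

/-- `(A, e) ⊞ (A, 1 - e) ≅ (A, 1)` in the Karoubi envelope. -/
noncomputable def biprodKaroubiComplIso (P : Karoubi C) :
    P ⊞ karoubiCompl P ≅ (toKaroubi C).obj P.X where
  hom := biprod.desc (Karoubi.decompId_i P) (Karoubi.decompId_i (karoubiCompl P))
  inv := biprod.lift (Karoubi.decompId_p P) (Karoubi.decompId_p (karoubiCompl P))
  hom_inv_id := by
    apply biprod.hom_ext' <;> apply biprod.hom_ext <;> simp only [Category.assoc] <;>
      [erw [biprod.inl_desc_assoc, biprod.lift_fst]; erw [biprod.inl_desc_assoc, biprod.lift_snd];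
        erw [biprod.inr_desc_assoc, biprod.lift_fst]; erw [biprod.inr_desc_assoc, biprod.lift_snd]] <;>
      simp [Karoubi.hom_ext_iff, Karoubi.decompId_i, Karoubi.decompId_p, karoubiCompl, P.idem,
        Preadditive.comp_sub, Preadditive.sub_comp]
  inv_hom_id := by
    erw [biprod.lift_desc]
    ext
    simp [Karoubi.decompId_i, Karoubi.decompId_p, karoubiCompl, P.idem,
      Preadditive.comp_sub, Preadditive.sub_comp]

end KaroubiCompl

/-- Uniqueness of the induced structure: if `Θ'` is a class of triangles of `Karoubi C`
satisfying the pretriangulated axioms (TR1)-(TR3) (i.e. it is the class of distinguished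
triangles of a `Pretriangulated` structure on `Karoubi C`), is closed under direct summands
and contains the image under `(toKaroubi C).mapTriangle` of every distinguished triangle of
`C`, then `Θ'` coincides with `Θ̃`. -/
theorem stmt15 (P : Pretriangulated (Karoubi C))
    (hsummand : ∀ T T' : Triangle (Karoubi C),
      triangleSum T T' ∈ P.distinguishedTriangles → T ∈ P.distinguishedTriangles)
    (himage : ∀ S : Triangle C, (S ∈ distTriang C) →
      (toKaroubi C).mapTriangle.obj S ∈ P.distinguishedTriangles) :
    P.distinguishedTriangles = thetaTilde C := by
  letI := P
  apply Set.eq_of_subset_of_subset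
  · intro T hT
    obtain ⟨Z, g, h, hT''⟩ := Pretriangulated.distinguished_cocone_triangle
      (0 : karoubiCompl T.obj₁ ⟶ karoubiCompl T.obj₂)
    have hsum := triangleSum_distinguished T _ hT hT''
    let e₁ := biprodKaroubiComplIso T.obj₁
    let e₂ := biprodKaroubiComplIso T.obj₂
    let q : (toKaroubi C).obj T.obj₁.X ⟶ (toKaroubi C).obj T.obj₂.X :=
      e₁.inv ≫ (triangleSum T (Triangle.mk
        (0 : karoubiCompl T.obj₁ ⟶ karoubiCompl T.obj₂) g h)).mor₁ ≫ e₂.hom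
    obtain ⟨Z', g', h', hS⟩ :=
      Pretriangulated.distinguished_cocone_triangle ((toKaroubi C).preimage q)
    refine ⟨_, _, hS, ⟨Pretriangulated.isoTriangleOfIso₁₂ _ _ hsum (himage _ hS) e₁ e₂ ?_⟩⟩
    dsimp [Functor.mapTriangle]
    erw [Functor.map_preimage]
    exact (e₁.hom_inv_id_assoc _).symm
  · rintro T ⟨T', S, hS, ⟨iso⟩⟩
    exact hsummand T T' (Pretriangulated.isomorphic_distinguished _ (himage S hS) _ iso)
end
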